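/- Per-block leave-p-out identity: let n ≥ 2, λ ⊆ {1,…,n} a block with n_λ := card(λ) ≥ 2, and p an integer with 1 ≤ p < n_λ. Let Y_1,…,Y_n be arbitrary real numbers, S_{λ,1} := Σ_{i∈λ} Y_i, S_{λ,2} := Σ_{i∈λ} Y_i². With V_λ(k) := Σ_{r≥1} r^k · C(n−p, r)·C(p, n_λ−r) / C(n, n_λ) for k ∈ {−1,0,1} (binomial coefficients being zero outside their range), A_λ := V_λ(0)·(1 − 1/n_λ) − V_λ(1)/n_λ + V_λ(−1), and B_λ := V_λ(1)·(2 − 1_{n_λ≥3})/(n_λ(n_λ−1)) + (V_λ(0)/(n_λ−1))·((1 + 1/n_λ)·1_{n_λ≥3} − 2) − V_λ(−1)·1_{n_λ≥3}/(n_λ−1), one has C(n,p)^{-1} Σ_{I_t ⊆ {1,…,n}, card(I_t)=n−p} Σ_{j∈λ, j∉I_t} (Y_j − mean{Y_i : i ∈ I_t ∩ λ})² = (A_λ − B_λ)·S_{λ,2} + B_λ·S_{λ,1}². -/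

import Mathlib

open Finset

namespace LpoPerBlock


/-- `V_λ(k) = ∑_{r ≥ 1} r^k C(n−p, r) C(p, n_λ−r) / C(n, n_λ)`, binomial coefficients
being zero outside their range (all terms with `r > n` vanish). -/
noncomputable def Vcoef (n p nl : ℕ) (k : ℤ) : ℝ :=
  ∑ r ∈ Finset.Icc 1 n,
    (r : ℝ) ^ k * ((n - p).choose r : ℝ) *
      (if r ≤ nl then ((p.choose (nl - r)) : ℝ) else 0) / ((n.choose nl) : ℝ)

/-- `A_λ = V_λ(0)(1 − 1/n_λ) − V_λ(1)/n_λ + V_λ(−1)`. -/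
noncomputable def Acoef (n p nl : ℕ) : ℝ :=
  Vcoef n p nl 0 * (1 - 1 / (nl : ℝ)) - Vcoef n p nl 1 / (nl : ℝ) + Vcoef n p nl (-1)

/-- `B_λ = V_λ(1)(2 − 1_{n_λ≥3})/(n_λ(n_λ−1)) + (V_λ(0)/(n_λ−1))((1 + 1/n_λ)1_{n_λ≥3} − 2)
          − V_λ(−1)·1_{n_λ≥3}/(n_λ−1)`. -/
noncomputable def Bcoef (n p nl : ℕ) : ℝ :=
  Vcoef n p nl 1 * (2 - if 3 ≤ nl then (1 : ℝ) else 0) / ((nl : ℝ) * ((nl : ℝ) - 1))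
    + Vcoef n p nl 0 / ((nl : ℝ) - 1) *
        ((1 + 1 / (nl : ℝ)) * (if 3 ≤ nl then (1 : ℝ) else 0) - 2)
    - Vcoef n p nl (-1) * (if 3 ≤ nl then (1 : ℝ) else 0) / ((nl : ℝ) - 1)

section Aux
variable {ι : Type*} [DecidableEq ι]

lemma filter_not_mem_powersetCard (s : Finset ι) (j : ι) (r : ℕ) :
    ((s.powersetCard r).filter (fun A => j ∉ A)) = (s.erase j).powersetCard r := by
  ext A
  simp only [mem_filter, mem_powersetCard, subset_erase]
  tauto

lemma card_filter_mem_powersetCard (s : Finset ι) (i : ι) (hi : i ∈ s) (r : ℕ) (hr : 1 ≤ r) :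
    ((s.powersetCard r).filter (fun A => i ∈ A)).card = (s.card - 1).choose (r - 1) := by
  have h : ((s.powersetCard r).filter (fun A => i ∈ A)).card
      = ((s.erase i).powersetCard (r - 1)).card := by
    refine Finset.card_bij' (fun A _ => A.erase i) (fun B _ => insert i B) ?_ ?_ ?_ ?_
    · intro A hA
      simp only [mem_filter, mem_powersetCard] at hA
      simp only [mem_powersetCard]
      exact ⟨erase_subset_erase _ hA.1.1, by rw [card_erase_of_mem hA.2, hA.1.2]⟩
    · intro B hB
      simp only [mem_powersetCard] at hB
      have hiB : i ∉ B := fun h => (mem_erase.mp (hB.1 h)).1 rfl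
      simp only [mem_filter, mem_powersetCard]
      refine ⟨⟨?_, ?_⟩, mem_insert_self _ _⟩
      · intro x hx
        rcases mem_insert.mp hx with h | h
        · exact h ▸ hi
        · exact (erase_subset _ _) (hB.1 h)
      · rw [card_insert_of_notMem hiB, hB.2]; omega
    · intro A hA
      simp only [mem_filter] at hA
      exact insert_erase hA.2
    · intro B hB
      simp only [mem_powersetCard] at hB
      have hiB : i ∉ B := fun h => (mem_erase.mp (hB.1 h)).1 rfl
      exact erase_insert hiB
  rw [h, card_powersetCard, card_erase_of_mem hi]

lemma card_filter_pair_mem_powersetCard (s : Finset ι) (i j : ι) (hi : i ∈ s) (hj : j ∈ s)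
    (hij : i ≠ j) (r : ℕ) (hr : 2 ≤ r) :
    ((s.powersetCard r).filter (fun A => i ∈ A ∧ j ∈ A)).card
      = (s.card - 2).choose (r - 2) := by
  have h : ((s.powersetCard r).filter (fun A => i ∈ A ∧ j ∈ A)).card
      = (((s.erase i).erase j).powersetCard (r - 2)).card := by
    refine Finset.card_bij' (fun A _ => (A.erase i).erase j) (fun B _ => insert i (insert j B)) ?_ ?_ ?_ ?_
    · intro A hA
      simp only [mem_filter, mem_powersetCard] at hA
      simp only [mem_powersetCard]
      constructor
      · exact erase_subset_erase _ (erase_subset_erase _ hA.1.1)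
      · rw [card_erase_of_mem (mem_erase.mpr ⟨fun h => hij h.symm, hA.2.2⟩),
          card_erase_of_mem hA.2.1, hA.1.2]
        omega
    · intro B hB
      simp only [mem_powersetCard] at hB
      have hjB : j ∉ B := fun h => (mem_erase.mp (hB.1 h)).1 rfl
      have hiB : i ∉ B := fun h => (mem_erase.mp ((erase_subset _ _) (hB.1 h))).1 rfl
      have hiJB : i ∉ insert j B := by
        simp only [mem_insert]; rintro (h | h); exact hij h; exact hiB h
      simp only [mem_filter, mem_powersetCard]
      refine ⟨⟨?_, ?_⟩, mem_insert_self _ _, mem_insert_of_mem (mem_insert_self _ _)⟩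
      · intro x hx
        rcases mem_insert.mp hx with h | h
        · exact h ▸ hi
        · rcases mem_insert.mp h with h' | h'
          · exact h' ▸ hj
          · exact (erase_subset _ _) ((erase_subset _ _) (hB.1 h'))
      · rw [card_insert_of_notMem hiJB, card_insert_of_notMem hjB, hB.2]; omega
    · intro A hA
      simp only [mem_filter] at hA
      show insert i (insert j ((A.erase i).erase j)) = A
      rw [insert_erase (mem_erase.mpr ⟨fun h => hij h.symm, hA.2.2⟩), insert_erase hA.2.1]
    · intro B hB
      simp only [mem_powersetCard] at hB
      have hjB : j ∉ B := fun h => (mem_erase.mp (hB.1 h)).1 rfl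
      have hiB : i ∉ B := fun h => (mem_erase.mp ((erase_subset _ _) (hB.1 h))).1 rfl
      have hiJB : i ∉ insert j B := by
        simp only [mem_insert]; rintro (h | h); exact hij h; exact hiB h
      show ((insert i (insert j B)).erase i).erase j = B
      rw [erase_insert hiJB, erase_insert hjB]
  rw [h, card_powersetCard, card_erase_of_mem (mem_erase.mpr ⟨Ne.symm hij, hj⟩),
    card_erase_of_mem hi]
  congr 1


lemma sum_subset_ite (s : Finset ι) (A : Finset ι) (hA : A ⊆ s) (g : ι → ℝ) :
    ∑ i ∈ A, g i = ∑ i ∈ s, if i ∈ A then g i else 0 := by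
  rw [Finset.sum_ite_mem, Finset.inter_eq_right.mpr hA]

lemma sum_powersetCard_mem (s : Finset ι) (g : ι → ℝ) {r : ℕ} (hr : 1 ≤ r) :
    ∑ A ∈ s.powersetCard r, ∑ i ∈ A, g i
      = ((s.card - 1).choose (r - 1) : ℝ) * ∑ i ∈ s, g i := by
  have h1 : ∀ A ∈ s.powersetCard r, ∑ i ∈ A, g i = ∑ i ∈ s, if i ∈ A then g i else 0 :=
    fun A hA => sum_subset_ite s A (mem_powersetCard.mp hA).1 g
  rw [Finset.sum_congr rfl h1, Finset.sum_comm, Finset.mul_sum]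
  refine Finset.sum_congr rfl fun i hi => ?_
  rw [← Finset.sum_filter, Finset.sum_const,
    card_filter_mem_powersetCard s i hi r hr, nsmul_eq_mul]

lemma sum_powersetCard_sdiff (s : Finset ι) (g : ι → ℝ) (r : ℕ) :
    ∑ A ∈ s.powersetCard r, ∑ j ∈ s \ A, g j
      = ((s.card - 1).choose r : ℝ) * ∑ j ∈ s, g j := by
  have h1 : ∀ A ∈ s.powersetCard r, ∑ j ∈ s \ A, g j
      = ∑ j ∈ s, if j ∉ A then g j else 0 := by
    intro A hA
    rw [Finset.sum_ite, Finset.sum_const_zero, add_zero]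
    congr 1
    rw [Finset.sdiff_eq_filter]
  rw [Finset.sum_congr rfl h1, Finset.sum_comm, Finset.mul_sum]
  refine Finset.sum_congr rfl fun j hj => ?_
  rw [← Finset.sum_filter, filter_not_mem_powersetCard, Finset.sum_const,
    card_powersetCard, card_erase_of_mem hj, nsmul_eq_mul]

lemma sum_powersetCard_pair (s : Finset ι) (h : ι → ι → ℝ) {r : ℕ} (hr : 2 ≤ r) :
    ∑ A ∈ s.powersetCard r, ∑ i ∈ A, ∑ j ∈ A.erase i, h i j
      = ((s.card - 2).choose (r - 2) : ℝ) * ∑ i ∈ s, ∑ j ∈ s.erase i, h i j := by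
  have h1 : ∀ A ∈ s.powersetCard r, ∑ i ∈ A, ∑ j ∈ A.erase i, h i j
      = ∑ i ∈ s, ∑ j ∈ s.erase i, if i ∈ A ∧ j ∈ A then h i j else 0 := by
    intro A hA
    have hAs := (mem_powersetCard.mp hA).1
    rw [sum_subset_ite s A hAs]
    refine Finset.sum_congr rfl fun i hi => ?_
    by_cases hiA : i ∈ A
    · rw [if_pos hiA]
      have : A.erase i ⊆ s.erase i := erase_subset_erase _ hAs
      rw [sum_subset_ite (s.erase i) (A.erase i) this]
      refine Finset.sum_congr rfl fun j hj => ?_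
      have hji : j ≠ i := (mem_erase.mp hj).1
      by_cases hjA : j ∈ A
      · rw [if_pos (mem_erase.mpr ⟨hji, hjA⟩), if_pos ⟨hiA, hjA⟩]
      · rw [if_neg (fun hc => hjA (mem_erase.mp hc).2), if_neg (fun hc => hjA hc.2)]
    · rw [if_neg hiA]
      symm
      refine Finset.sum_eq_zero fun j hj => ?_
      rw [if_neg (fun hc => hiA hc.1)]
  rw [Finset.sum_congr rfl h1, Finset.sum_comm, Finset.mul_sum]
  refine Finset.sum_congr rfl fun i hi => ?_
  rw [Finset.sum_comm, Finset.mul_sum]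
  refine Finset.sum_congr rfl fun j hj => ?_
  rw [← Finset.sum_filter, Finset.sum_const,
    card_filter_pair_mem_powersetCard s i j hi ((mem_erase.mp hj).2)
      (fun hc => (mem_erase.mp hj).1 hc.symm) r hr, nsmul_eq_mul]

lemma sq_sum_decomp (s : Finset ι) (Y : ι → ℝ) :
    (∑ i ∈ s, Y i) ^ 2 = ∑ i ∈ s, Y i ^ 2 + ∑ i ∈ s, ∑ j ∈ s.erase i, Y i * Y j := by
  rw [sq, Finset.sum_mul_sum, ← Finset.sum_add_distrib]
  refine Finset.sum_congr rfl fun i hi => ?_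
  rw [← Finset.add_sum_erase _ _ hi, sq]

lemma sum_powersetCard_sq (s : Finset ι) (Y : ι → ℝ) {r : ℕ} (hr : 1 ≤ r) :
    ∑ A ∈ s.powersetCard r, (∑ i ∈ A, Y i) ^ 2
      = ((s.card - 1).choose (r - 1) : ℝ) * ∑ i ∈ s, Y i ^ 2
        + (if 2 ≤ r then ((s.card - 2).choose (r - 2) : ℝ) else 0)
            * ((∑ i ∈ s, Y i) ^ 2 - ∑ i ∈ s, Y i ^ 2) := by
  have h1 : ∀ A ∈ s.powersetCard r, (∑ i ∈ A, Y i) ^ 2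
      = ∑ i ∈ A, Y i ^ 2 + ∑ i ∈ A, ∑ j ∈ A.erase i, Y i * Y j :=
    fun A _ => sq_sum_decomp A Y
  rw [Finset.sum_congr rfl h1, Finset.sum_add_distrib, sum_powersetCard_mem s _ hr]
  congr 1
  by_cases h2 : 2 ≤ r
  · rw [if_pos h2, sum_powersetCard_pair s _ h2]
    congr 1
    have := sq_sum_decomp s Y
    linarith
  · rw [if_neg h2, zero_mul]
    refine Finset.sum_eq_zero fun A hA => Finset.sum_eq_zero fun i hiA => ?_
    have hc : A.card = 1 := by
      have := (mem_powersetCard.mp hA).2; omega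
    have : A.erase i = ∅ := Finset.card_eq_zero.mp (by rw [card_erase_of_mem hiA, hc])
    rw [this, Finset.sum_empty]

end Aux

lemma choose_pred_real (c r : ℕ) (h1 : 1 ≤ r) (h2 : r ≤ c) :
    ((c - 1).choose (r - 1) : ℝ) = (c.choose r : ℝ) * r / c := by
  have hc : 1 ≤ c := le_trans h1 h2
  have key : c * (c - 1).choose (r - 1) = c.choose r * r := by
    have h := Nat.add_one_mul_choose_eq (c - 1) (r - 1)
    simp only [Nat.succ_eq_add_one, Nat.sub_add_cancel hc, Nat.sub_add_cancel h1] at h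
    exact h
  have hc0 : (c : ℝ) ≠ 0 := Nat.cast_ne_zero.mpr (by omega)
  field_simp
  exact_mod_cast (mul_comm ((c:ℕ)) ((c-1).choose (r-1))) ▸ key

lemma choose_pred_real' (c r : ℕ) (h1 : 1 ≤ r) (h2 : r ≤ c) :
    ((c - 1).choose r : ℝ) = (c.choose r : ℝ) * ((c : ℝ) - r) / c := by
  have hc : 1 ≤ c := le_trans h1 h2
  have pascal : (c.choose r : ℝ) = ((c - 1).choose (r - 1) : ℝ) + ((c - 1).choose r : ℝ) := by
    have h := Nat.choose_succ_succ (c - 1) (r - 1)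
    simp only [Nat.succ_eq_add_one, Nat.sub_add_cancel hc, Nat.sub_add_cancel h1] at h
    exact_mod_cast h
  have hc0 : (c : ℝ) ≠ 0 := Nat.cast_ne_zero.mpr (by omega)
  rw [choose_pred_real c r h1 h2] at pascal
  field_simp at pascal ⊢
  linarith

lemma choose_pred2_real (c r : ℕ) (h1 : 1 ≤ r) (h2 : r ≤ c) (hc : 2 ≤ c) :
    (if 2 ≤ r then ((c - 2).choose (r - 2) : ℝ) else 0)
      = (c.choose r : ℝ) * ((r : ℝ) * ((r : ℝ) - 1)) / ((c : ℝ) * ((c : ℝ) - 1)) := by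
  by_cases h : 2 ≤ r
  · rw [if_pos h]
    have e1 := choose_pred_real c r h1 h2
    have e2 := choose_pred_real (c - 1) (r - 1) (by omega) (by omega)
    have ec : c - 1 - 1 = c - 2 := by omega
    have er : r - 1 - 1 = r - 2 := by omega
    have hcR : ((c - 1 : ℕ) : ℝ) = (c : ℝ) - 1 := by
      rw [Nat.cast_sub (by omega)]; norm_num
    have hrR : ((r - 1 : ℕ) : ℝ) = (r : ℝ) - 1 := by
      rw [Nat.cast_sub (by omega)]; norm_num
    rw [ec, er, hcR, hrR] at e2
    have hc0 : (c : ℝ) ≠ 0 := Nat.cast_ne_zero.mpr (by omega)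
    have hc1 : (c : ℝ) - 1 ≠ 0 := by
      have : (2 : ℝ) ≤ (c : ℝ) := by exact_mod_cast hc
      linarith
    rw [e2, e1]
    field_simp
  · rw [if_neg h]
    have hr1 : r = 1 := by omega
    subst hr1
    norm_num

lemma sum_powersetCard_F {ι : Type*} [DecidableEq ι] (s : Finset ι) (Y : ι → ℝ) {r : ℕ}
    (hr : 1 ≤ r) (hrc : r ≤ s.card) (hc : 2 ≤ s.card) :
    ∑ A ∈ s.powersetCard r, ∑ j ∈ s \ A, (Y j - (∑ i ∈ A, Y i) / (A.card : ℝ)) ^ 2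
      = (s.card.choose r : ℝ) *
          ((1 - (r : ℝ) / (s.card : ℝ) + (s.card : ℝ) / ((r : ℝ) * ((s.card : ℝ) - 1))
              - (r : ℝ) / ((s.card : ℝ) * ((s.card : ℝ) - 1))) * (∑ i ∈ s, Y i ^ 2)
            + (-(((s.card : ℝ) - (r : ℝ)) * ((r : ℝ) + 1))
                  / ((r : ℝ) * (s.card : ℝ) * ((s.card : ℝ) - 1))) * (∑ i ∈ s, Y i) ^ 2) := by
  set c := s.card with hcdef
  have hr0 : (r : ℝ) ≠ 0 := Nat.cast_ne_zero.mpr (by omega)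
  have hc0 : (c : ℝ) ≠ 0 := Nat.cast_ne_zero.mpr (by omega)
  have hc1 : (c : ℝ) - 1 ≠ 0 := by
    have : (2 : ℝ) ≤ (c : ℝ) := by exact_mod_cast hc
    linarith
  have h1 : ∀ A ∈ s.powersetCard r,
      ∑ j ∈ s \ A, (Y j - (∑ i ∈ A, Y i) / (A.card : ℝ)) ^ 2
        = ∑ j ∈ s \ A, Y j ^ 2
          + (-(2 : ℝ) / r) * ((∑ i ∈ A, Y i) * (∑ i ∈ s, Y i))
          + ((2 : ℝ) / r + ((c : ℝ) - r) / (r : ℝ) ^ 2) * (∑ i ∈ A, Y i) ^ 2 := by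
    intro A hA
    obtain ⟨hAs, hAcard⟩ := mem_powersetCard.mp hA
    have hsd : ∑ j ∈ s \ A, Y j = (∑ i ∈ s, Y i) - (∑ i ∈ A, Y i) :=
      Finset.sum_sdiff_eq_sub hAs
    have hcards : (s \ A).card = c - r := by rw [card_sdiff_of_subset hAs, hAcard]
    have expand : ∀ j, (Y j - (∑ i ∈ A, Y i) / (A.card : ℝ)) ^ 2
        = Y j ^ 2 - (2 * ((∑ i ∈ A, Y i) / (A.card : ℝ))) * Y j
            + ((∑ i ∈ A, Y i) / (A.card : ℝ)) ^ 2 := by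
      intro j; ring
    rw [Finset.sum_congr rfl fun j _ => expand j]
    rw [Finset.sum_add_distrib, Finset.sum_sub_distrib, ← Finset.mul_sum, hsd,
      Finset.sum_const, hcards, nsmul_eq_mul, hAcard]
    have hcrR : ((c - r : ℕ) : ℝ) = (c : ℝ) - (r : ℝ) := by
      rw [Nat.cast_sub hrc]
    rw [hcrR]
    field_simp
    ring
  rw [Finset.sum_congr rfl h1, Finset.sum_add_distrib, Finset.sum_add_distrib,
    ← Finset.mul_sum, ← Finset.mul_sum, sum_powersetCard_sdiff s _ r,
    ← Finset.sum_mul, sum_powersetCard_mem s Y hr, sum_powersetCard_sq s Y hr]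
  rw [choose_pred_real c r hr hrc, choose_pred_real' c r hr hrc,
    choose_pred2_real c r hr hrc hc]
  field_simp
  ring

lemma choose_product_id {n p c r : ℕ} (hc : c ≤ n) (hp : p ≤ n) (hr : r ≤ c)
    (hrm : r ≤ n - p) :
    c.choose r * (n - c).choose (n - p - r) * n.choose c
      = (n - p).choose r * p.choose (c - r) * n.choose (n - p) := by
  by_cases h : c - r ≤ p
  · have hle : n - p - r ≤ n - c := by omega
    have e1 : n - c - (n - p - r) = p - (c - r) := by omega
    apply Nat.eq_of_mul_eq_mul_right
      (show 0 < r.factorial * (c - r).factorial *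
          ((n - p - r).factorial * (p - (c - r)).factorial) from by positivity)
    have f1 := Nat.choose_mul_factorial_mul_factorial hr
    have f2 := Nat.choose_mul_factorial_mul_factorial hle
    rw [e1] at f2
    have f3 := Nat.choose_mul_factorial_mul_factorial hc
    have f4 := Nat.choose_mul_factorial_mul_factorial hrm
    have f5 := Nat.choose_mul_factorial_mul_factorial h
    have f6 := Nat.choose_mul_factorial_mul_factorial (Nat.sub_le n p)
    rw [show n - (n - p) = p from by omega] at f6
    calc c.choose r * (n - c).choose (n - p - r) * n.choose c *
          (r.factorial * (c - r).factorial *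
            ((n - p - r).factorial * (p - (c - r)).factorial))
        = (c.choose r * r.factorial * (c - r).factorial) *
            ((n - c).choose (n - p - r) * (n - p - r).factorial *
              (p - (c - r)).factorial) * n.choose c := by ring
      _ = n.choose c * c.factorial * (n - c).factorial := by rw [f1, f2]; ring
      _ = n.factorial := f3
      _ = n.choose (n - p) * (n - p).factorial * p.factorial := f6.symm
      _ = ((n - p).choose r * r.factorial * (n - p - r).factorial) *
            (p.choose (c - r) * (c - r).factorial * (p - (c - r)).factorial) *
            n.choose (n - p) := by rw [f4, f5]; ring
      _ = (n - p).choose r * p.choose (c - r) * n.choose (n - p) *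
            (r.factorial * (c - r).factorial *
              ((n - p - r).factorial * (p - (c - r)).factorial)) := by ring
  · have h1 : p.choose (c - r) = 0 := Nat.choose_eq_zero_of_lt (by omega)
    have h2 : (n - c).choose (n - p - r) = 0 := Nat.choose_eq_zero_of_lt (by omega)
    simp [h1, h2]

lemma count_inter {n : ℕ} (lam : Finset (Fin n)) (A : Finset (Fin n)) (hA : A ⊆ lam)
    (m : ℕ) :
    (((Finset.univ : Finset (Fin n)).powersetCard m).filter (fun It => It ∩ lam = A)).card
      = if A.card ≤ m then (n - lam.card).choose (m - A.card) else 0 := by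
  split_ifs with h
  · have hcompl : ((Finset.univ : Finset (Fin n)) \ lam).card = n - lam.card := by
      rw [card_sdiff_of_subset (subset_univ lam), card_univ, Fintype.card_fin]
    rw [← hcompl, ← card_powersetCard]
    refine Finset.card_bij' (fun It _ => It \ lam) (fun B _ => A ∪ B) ?_ ?_ ?_ ?_
    · intro It hIt
      simp only [mem_filter, mem_powersetCard] at hIt
      obtain ⟨⟨hsub, hcard⟩, hint⟩ := hIt
      simp only [mem_powersetCard]
      refine ⟨sdiff_subset_sdiff (subset_univ It) (le_refl lam), ?_⟩
      have hia := Finset.card_inter_add_card_sdiff It lam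
      rw [hint] at hia
      omega
    · intro B hB
      simp only [mem_powersetCard] at hB
      obtain ⟨hBsub, hBcard⟩ := hB
      have hBlam : ∀ x ∈ B, x ∉ lam := fun x hx => (Finset.mem_sdiff.mp (hBsub hx)).2
      have hdisj : Disjoint A B := Finset.disjoint_left.mpr
        (fun {x} hxA hxB => hBlam x hxB (hA hxA))
      simp only [mem_filter, mem_powersetCard]
      refine ⟨⟨subset_univ _, ?_⟩, ?_⟩
      · rw [card_union_of_disjoint hdisj, hBcard]; omega
      · rw [union_inter_distrib_right, inter_eq_left.mpr hA,
          Finset.eq_empty_of_forall_notMem (s := B ∩ lam)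
            (fun x hx => hBlam x (mem_inter.mp hx).1 (mem_inter.mp hx).2),
          union_empty]
    · intro It hIt
      simp only [mem_filter] at hIt
      show A ∪ It \ lam = It
      rw [← hIt.2, union_comm]
      exact Finset.sdiff_union_inter It lam
    · intro B hB
      simp only [mem_powersetCard] at hB
      have hBlam : ∀ x ∈ B, x ∉ lam := fun x hx => (Finset.mem_sdiff.mp (hB.1 hx)).2
      show (A ∪ B) \ lam = B
      rw [union_sdiff_distrib, Finset.sdiff_eq_empty_iff_subset.mpr hA, empty_union]
      exact Finset.sdiff_eq_self_iff_disjoint.mpr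
        (show Disjoint B lam from Disjoint.symm <|
          Finset.disjoint_left.mpr (fun {x} hxlam hxB => hBlam x hxB hxlam))
  · rw [Finset.card_eq_zero, Finset.filter_eq_empty_iff]
    intro It hIt hint
    have hle : (It ∩ lam).card ≤ It.card := card_le_card inter_subset_left
    rw [hint, (mem_powersetCard.mp hIt).2] at hle
    omega

/-- The inner validation-error sum, as a function of the within-block training set. -/
noncomputable def Gfun {n : ℕ} (lam : Finset (Fin n)) (Y : Fin n → ℝ)
    (A : Finset (Fin n)) : ℝ :=
  ∑ j ∈ lam \ A, (Y j - (∑ i ∈ A, Y i) / (A.card : ℝ)) ^ 2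

/-- Number of training sets of size `n - p` with given within-block part of size `r`. -/
def wfun (n p c r : ℕ) : ℕ := if r ≤ n - p then (n - c).choose (n - p - r) else 0

set_option maxHeartbeats 1000000 in
theorem main_aux {n : ℕ} (hn : 2 ≤ n)
    (lam : Finset (Fin n)) (hlam : 2 ≤ lam.card)
    (p : ℕ) (hp1 : 1 ≤ p) (hp2 : p < lam.card) (Y : Fin n → ℝ) :
    ((n.choose p : ℝ))⁻¹ *
        ∑ It ∈ Finset.powersetCard (n - p) (Finset.univ : Finset (Fin n)),
          ∑ j ∈ lam \ It,
            (Y j - (∑ i ∈ It ∩ lam, Y i) / ((It ∩ lam).card : ℝ)) ^ 2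
      = (Acoef n p lam.card - Bcoef n p lam.card) * (∑ i ∈ lam, Y i ^ 2)
        + Bcoef n p lam.card * (∑ i ∈ lam, Y i) ^ 2 := by
  classical
  have hcn : lam.card ≤ n := by simpa using Finset.card_le_univ lam
  have hpn : p < n := lt_of_lt_of_le hp2 hcn
  have hc0 : (lam.card : ℝ) ≠ 0 := Nat.cast_ne_zero.mpr (by omega)
  have hc1 : (lam.card : ℝ) - 1 ≠ 0 := by
    have : (2 : ℝ) ≤ (lam.card : ℝ) := by exact_mod_cast hlam
    linarith
  have hD : ((n.choose lam.card : ℕ) : ℝ) ≠ 0 :=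
    Nat.cast_ne_zero.mpr (Nat.choose_pos hcn).ne'
  have hP : ((n.choose p : ℕ) : ℝ) ≠ 0 :=
    Nat.cast_ne_zero.mpr (Nat.choose_pos (le_of_lt hpn)).ne'
  -- Step 1: the summand depends only on `It ∩ lam`.
  have h0 : ∀ It : Finset (Fin n),
      ∑ j ∈ lam \ It, (Y j - (∑ i ∈ It ∩ lam, Y i) / ((It ∩ lam).card : ℝ)) ^ 2
        = Gfun lam Y (It ∩ lam) := by
    intro It
    rw [Gfun]
    congr 1
    rw [Finset.sdiff_inter_self_right]
  -- Step 2: group the training sets according to their within-block part.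
  have h1 : ∑ It ∈ Finset.powersetCard (n - p) (Finset.univ : Finset (Fin n)),
        ∑ j ∈ lam \ It, (Y j - (∑ i ∈ It ∩ lam, Y i) / ((It ∩ lam).card : ℝ)) ^ 2
      = ∑ A ∈ lam.powerset, (wfun n p lam.card A.card : ℝ) * Gfun lam Y A := by
    rw [Finset.sum_congr rfl fun It _ => h0 It,
      ← Finset.sum_fiberwise_of_maps_to (g := fun It => It ∩ lam) (t := lam.powerset)
        (fun It _ => Finset.mem_powerset.mpr Finset.inter_subset_right)
        (fun It => Gfun lam Y (It ∩ lam))]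
    refine Finset.sum_congr rfl fun A hA => ?_
    rw [Finset.sum_congr rfl (fun It hIt => by rw [(Finset.mem_filter.mp hIt).2]),
      Finset.sum_const, nsmul_eq_mul,
      count_inter lam A (Finset.mem_powerset.mp hA) (n - p), wfun]
  -- Step 3: group by the cardinality of the within-block part.
  have h2 : ∑ A ∈ lam.powerset, (wfun n p lam.card A.card : ℝ) * Gfun lam Y A
      = ∑ r ∈ Finset.range (lam.card + 1),
          (wfun n p lam.card r : ℝ) * ∑ A ∈ lam.powersetCard r, Gfun lam Y A := by
    rw [Finset.powerset_card_disjiUnion]; erw [Finset.sum_disjiUnion]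
    refine Finset.sum_congr rfl fun r hr => ?_
    rw [Finset.mul_sum]
    refine Finset.sum_congr rfl fun A hA => ?_
    rw [(Finset.mem_powersetCard.mp hA).2]
  -- Step 4: the empty within-block part does not occur.
  have h3 : ∑ r ∈ Finset.range (lam.card + 1),
        (wfun n p lam.card r : ℝ) * ∑ A ∈ lam.powersetCard r, Gfun lam Y A
      = ∑ r ∈ Finset.Icc 1 lam.card,
          (wfun n p lam.card r : ℝ) * ∑ A ∈ lam.powersetCard r, Gfun lam Y A := by
    refine (Finset.sum_subset
      (fun x hx => Finset.mem_range.mpr (by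
        have := (Finset.mem_Icc.mp hx).2; omega))
      (fun x hx hnx => ?_)).symm
    have hx0 : x = 0 := by
      simp only [Finset.mem_range] at hx
      simp only [Finset.mem_Icc] at hnx
      omega
    subst hx0
    have hz : wfun n p lam.card 0 = 0 := by
      rw [wfun, if_pos (Nat.zero_le _), Nat.sub_zero]
      exact Nat.choose_eq_zero_of_lt (by omega)
    rw [hz]
    norm_num
  -- Step 5: per-cardinality evaluation.
  have h4 : ∀ r ∈ Finset.Icc 1 lam.card,
      ∑ A ∈ lam.powersetCard r, Gfun lam Y A
        = (lam.card.choose r : ℝ) *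
            ((1 - (r : ℝ) / (lam.card : ℝ)
                + (lam.card : ℝ) / ((r : ℝ) * ((lam.card : ℝ) - 1))
                - (r : ℝ) / ((lam.card : ℝ) * ((lam.card : ℝ) - 1))) * (∑ i ∈ lam, Y i ^ 2)
              + (-(((lam.card : ℝ) - (r : ℝ)) * ((r : ℝ) + 1))
                    / ((r : ℝ) * (lam.card : ℝ) * ((lam.card : ℝ) - 1)))
                  * (∑ i ∈ lam, Y i) ^ 2) := by
    intro r hr
    obtain ⟨hr1, hrc⟩ := Finset.mem_Icc.mp hr
    simp only [Gfun]
    exact sum_powersetCard_F lam Y hr1 hrc hlam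
  -- Step 6: the weights match `V`.
  have hw : ∀ r ∈ Finset.Icc 1 lam.card,
      ((n.choose p : ℝ))⁻¹ * ((wfun n p lam.card r : ℝ) * (lam.card.choose r : ℝ))
        = ((n - p).choose r : ℝ) * (p.choose (lam.card - r) : ℝ)
            / ((n.choose lam.card : ℕ) : ℝ) := by
    intro r hr
    obtain ⟨hr1, hrc⟩ := Finset.mem_Icc.mp hr
    rw [wfun]
    by_cases hrm : r ≤ n - p
    · rw [if_pos hrm]
      have hid := choose_product_id (n := n) (p := p) (c := lam.card) (r := r)
        hcn (le_of_lt hpn) hrc hrm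
      rw [Nat.choose_symm (le_of_lt hpn)] at hid
      have hid2 : (n - lam.card).choose (n - p - r) * lam.card.choose r * n.choose lam.card
          = (n - p).choose r * p.choose (lam.card - r) * n.choose p := by
        rw [← hid]; ring
      have hidR : ((n - lam.card).choose (n - p - r) : ℝ) * (lam.card.choose r : ℝ)
            * ((n.choose lam.card : ℕ) : ℝ)
          = ((n - p).choose r : ℝ) * (p.choose (lam.card - r) : ℝ)
              * ((n.choose p : ℕ) : ℝ) := by
        exact_mod_cast hid2
      field_simp
      linear_combination hidR
    · rw [if_neg hrm]
      have : (n - p).choose r = 0 := Nat.choose_eq_zero_of_lt (by omega)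
      rw [this]
      norm_num
  -- Step 7: restricted form of Vcoef.
  have hV : ∀ k : ℤ, Vcoef n p lam.card k
      = ∑ r ∈ Finset.Icc 1 lam.card,
          (r : ℝ) ^ k * (((n - p).choose r : ℕ) : ℝ) * ((p.choose (lam.card - r) : ℕ) : ℝ)
            / ((n.choose lam.card : ℕ) : ℝ) := by
    intro k
    rw [Vcoef]
    rw [show (∑ r ∈ Finset.Icc 1 n,
        (r : ℝ) ^ k * (((n - p).choose r : ℕ) : ℝ) *
          (if r ≤ lam.card then ((p.choose (lam.card - r) : ℕ) : ℝ) else 0)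
            / ((n.choose lam.card : ℕ) : ℝ))
      = ∑ r ∈ Finset.Icc 1 lam.card,
        (r : ℝ) ^ k * (((n - p).choose r : ℕ) : ℝ) *
          (if r ≤ lam.card then ((p.choose (lam.card - r) : ℕ) : ℝ) else 0)
            / ((n.choose lam.card : ℕ) : ℝ)
      from (Finset.sum_subset (Finset.Icc_subset_Icc_right hcn) (fun x hx hnx => by
        have hxc : ¬ x ≤ lam.card := by
          simp only [Finset.mem_Icc] at hx hnx
          omega
        rw [if_neg hxc, mul_zero, zero_div])).symm]
    exact Finset.sum_congr rfl fun r hr => by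
      rw [if_pos (Finset.mem_Icc.mp hr).2]
  -- Step 8: Acoef and Bcoef as single sums.
  have hA' : Acoef n p lam.card
      = ∑ r ∈ Finset.Icc 1 lam.card,
          (((n - p).choose r : ℕ) : ℝ) * ((p.choose (lam.card - r) : ℕ) : ℝ)
              / ((n.choose lam.card : ℕ) : ℝ)
            * ((1 - 1 / (lam.card : ℝ)) - (r : ℝ) / (lam.card : ℝ) + ((r : ℝ))⁻¹) := by
    rw [Acoef, hV 0, hV 1, hV (-1), Finset.sum_mul, Finset.sum_div,
      ← Finset.sum_sub_distrib, ← Finset.sum_add_distrib]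
    refine Finset.sum_congr rfl fun r hr => ?_
    rw [zpow_zero, zpow_one, zpow_neg_one]
    ring
  have hB' : Bcoef n p lam.card
      = ∑ r ∈ Finset.Icc 1 lam.card,
          (((n - p).choose r : ℕ) : ℝ) * ((p.choose (lam.card - r) : ℕ) : ℝ)
              / ((n.choose lam.card : ℕ) : ℝ)
            * ((r : ℝ) * (2 - if 3 ≤ lam.card then (1 : ℝ) else 0)
                  / ((lam.card : ℝ) * ((lam.card : ℝ) - 1))
                + ((1 + 1 / (lam.card : ℝ)) * (if 3 ≤ lam.card then (1 : ℝ) else 0) - 2)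
                    / ((lam.card : ℝ) - 1)
                - ((r : ℝ))⁻¹ * (if 3 ≤ lam.card then (1 : ℝ) else 0)
                    / ((lam.card : ℝ) - 1)) := by
    rw [Bcoef, hV 0, hV 1, hV (-1), Finset.sum_mul, Finset.sum_div, Finset.sum_div,
      Finset.sum_mul, Finset.sum_mul, Finset.sum_div, ← Finset.sum_add_distrib,
      ← Finset.sum_sub_distrib]
    refine Finset.sum_congr rfl fun r hr => ?_
    rw [zpow_zero, zpow_one, zpow_neg_one]
    ring
  -- Step 9: per-cardinality term matches the target term.
  have h5 : ∀ r ∈ Finset.Icc 1 lam.card,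
      ((n.choose p : ℝ))⁻¹ *
          ((wfun n p lam.card r : ℝ) * ∑ A ∈ lam.powersetCard r, Gfun lam Y A)
        = ((((n - p).choose r : ℕ) : ℝ) * ((p.choose (lam.card - r) : ℕ) : ℝ)
              / ((n.choose lam.card : ℕ) : ℝ)
              * ((1 - 1 / (lam.card : ℝ)) - (r : ℝ) / (lam.card : ℝ) + ((r : ℝ))⁻¹)
            - (((n - p).choose r : ℕ) : ℝ) * ((p.choose (lam.card - r) : ℕ) : ℝ)
              / ((n.choose lam.card : ℕ) : ℝ)
              * ((r : ℝ) * (2 - if 3 ≤ lam.card then (1 : ℝ) else 0)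
                  / ((lam.card : ℝ) * ((lam.card : ℝ) - 1))
                + ((1 + 1 / (lam.card : ℝ)) * (if 3 ≤ lam.card then (1 : ℝ) else 0) - 2)
                    / ((lam.card : ℝ) - 1)
                - ((r : ℝ))⁻¹ * (if 3 ≤ lam.card then (1 : ℝ) else 0)
                    / ((lam.card : ℝ) - 1))) * (∑ i ∈ lam, Y i ^ 2)
          + (((n - p).choose r : ℕ) : ℝ) * ((p.choose (lam.card - r) : ℕ) : ℝ)
              / ((n.choose lam.card : ℕ) : ℝ)
              * ((r : ℝ) * (2 - if 3 ≤ lam.card then (1 : ℝ) else 0)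
                  / ((lam.card : ℝ) * ((lam.card : ℝ) - 1))
                + ((1 + 1 / (lam.card : ℝ)) * (if 3 ≤ lam.card then (1 : ℝ) else 0) - 2)
                    / ((lam.card : ℝ) - 1)
                - ((r : ℝ))⁻¹ * (if 3 ≤ lam.card then (1 : ℝ) else 0)
                    / ((lam.card : ℝ) - 1)) * (∑ i ∈ lam, Y i) ^ 2 := by
    intro r hr
    obtain ⟨hr1, hrc⟩ := Finset.mem_Icc.mp hr
    have hr0 : (r : ℝ) ≠ 0 := Nat.cast_ne_zero.mpr (by omega)
    have hww := hw r hr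
    rw [← mul_assoc] at hww
    rw [h4 r hr, ← mul_assoc, ← mul_assoc, hww]
    set w := (((n - p).choose r : ℕ) : ℝ) * ((p.choose (lam.card - r) : ℕ) : ℝ)
        / ((n.choose lam.card : ℕ) : ℝ) with hwdef
    by_cases h3c : 3 ≤ lam.card
    · simp only [if_pos h3c]
      field_simp
      ring
    · have hc2 : lam.card = 2 := by omega
      simp only [if_neg h3c, hc2]
      have hr12 : r = 1 ∨ r = 2 := by omega
      rcases hr12 with h | h <;> subst h <;> norm_num <;> (try field_simp) <;> (try ring) <;> (try norm_num)
  rw [h1, h2, h3, Finset.mul_sum, Finset.sum_congr rfl h5, hA', hB',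
    ← Finset.sum_sub_distrib, Finset.sum_mul, Finset.sum_mul, ← Finset.sum_add_distrib]

/-- **Per-block leave-`p`-out identity.**  For a block `lam ⊆ {1,…,n}` with
`n_λ = card lam ≥ 2` and `1 ≤ p < n_λ`, averaging over all training sets `It` of
cardinality `n − p` the squared prediction errors of the within-block training mean on
the validation points of `lam` gives `(A_λ − B_λ) S_{λ,2} + B_λ S_{λ,1}²`. -/
theorem lpo_per_block_identity {n : ℕ} (hn : 2 ≤ n)
    (lam : Finset (Fin n)) (hlam : 2 ≤ lam.card)
    (p : ℕ) (hp1 : 1 ≤ p) (hp2 : p < lam.card) (Y : Fin n → ℝ) :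
    ((n.choose p : ℝ))⁻¹ *
        ∑ It ∈ Finset.powersetCard (n - p) (Finset.univ : Finset (Fin n)),
          ∑ j ∈ lam \ It,
            (Y j - (∑ i ∈ It ∩ lam, Y i) / ((It ∩ lam).card : ℝ)) ^ 2
      = (Acoef n p lam.card - Bcoef n p lam.card) * (∑ i ∈ lam, Y i ^ 2)
        + Bcoef n p lam.card * (∑ i ∈ lam, Y i) ^ 2 := by
  exact main_aux hn lam hlam p hp1 hp2 Y

end LpoPerBlock
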